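/- For every real number C ≥ 1 there exists a real constant C' ≥ 1 (depending only on C) such that for all integers k ≥ 1 and N ≥ 1: ∑_{m=1}^{N} C^m (m!)² / k^m ≤ C' · ( k + C'^N (N!)² / k^N ). -/

import Mathlib

/-- For every real `C ≥ 1` there is `C' ≥ 1` such that for all integers `k, N ≥ 1`,
`∑_{m=1}^N C^m (m!)² / k^m ≤ C' (k + C'^N (N!)² / k^N)`. -/
theorem stmt_2 (C : ℝ) (hC : 1 ≤ C) :
    ∃ C' : ℝ, 1 ≤ C' ∧ ∀ k N : ℕ, 1 ≤ k → 1 ≤ N →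
      ∑ m ∈ Finset.Icc 1 N, C ^ m * (m.factorial : ℝ) ^ 2 / (k : ℝ) ^ m ≤
        C' * ((k : ℝ) + C' ^ N * (N.factorial : ℝ) ^ 2 / (k : ℝ) ^ N) := by
  classical
  refine ⟨2 * C, by linarith, fun k N hk hN => ?_⟩
  have hk0 : (0:ℝ) < k := by exact_mod_cast hk
  set t : ℕ → ℝ := fun m => C ^ m * (m.factorial : ℝ) ^ 2 / (k : ℝ) ^ m with ht
  have htpos : ∀ m, 0 < t m := by
    intro m
    have h1 : (0:ℝ) < C := by linarith
    have h2 : (0:ℝ) < (m.factorial : ℝ) := by exact_mod_cast m.factorial_pos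
    positivity
  have hstep : ∀ m : ℕ, t (m + 1) = t m * (C * ((m:ℝ) + 1) ^ 2 / k) := by
    intro m
    simp only [ht, Nat.factorial_succ, pow_succ]
    push_cast
    field_simp
  -- Lemma A: if C*m² ≤ k then t m ≤ 1
  have lemA : ∀ m : ℕ, C * (m:ℝ) ^ 2 ≤ k → t m ≤ 1 := by
    intro m
    induction m with
    | zero => intro _; simp [ht]
    | succ n ih =>
      intro h
      have hcast : ((n+1 : ℕ) : ℝ) = (n:ℝ) + 1 := by push_cast; ring
      have h' : C * (n:ℝ) ^ 2 ≤ k := by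
        refine le_trans ?_ h
        have : (n:ℝ) ^ 2 ≤ ((n+1:ℕ):ℝ) ^ 2 := by push_cast; nlinarith [Nat.cast_nonneg (α := ℝ) n]
        nlinarith [Nat.cast_nonneg (α := ℝ) n]
      have hfac : C * ((n:ℝ) + 1) ^ 2 / k ≤ 1 := by
        rw [div_le_one hk0]
        rw [hcast] at h; linarith
      have hfac0 : 0 ≤ C * ((n:ℝ) + 1) ^ 2 / k := by positivity
      rw [hstep]
      calc t n * (C * ((n:ℝ) + 1) ^ 2 / k) ≤ 1 * 1 := by
            apply mul_le_mul (ih h') hfac hfac0 zero_le_one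
        _ = 1 := by ring
  -- Lemma B: if k ≤ C*m² and m ≤ n then t m ≤ t n
  have lemB : ∀ m n : ℕ, m ≤ n → (k:ℝ) ≤ C * (m:ℝ) ^ 2 → t m ≤ t n := by
    intro m n hmn hkm
    induction n, hmn using Nat.le_induction with
    | base => exact le_refl _
    | succ n hmn ih =>
      have h1 : (1:ℝ) ≤ C * ((n:ℝ) + 1) ^ 2 / k := by
        rw [le_div_iff₀ hk0, one_mul]
        have hmn' : (m:ℝ) ≤ (n:ℝ) + 1 := by
          have : (m:ℝ) ≤ (n:ℝ) := by exact_mod_cast hmn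
          linarith
        have hm0 : (0:ℝ) ≤ (m:ℝ) := Nat.cast_nonneg m
        have hsq : (m:ℝ) ^ 2 ≤ ((n:ℝ) + 1) ^ 2 := by nlinarith
        nlinarith [mul_le_mul_of_nonneg_left hsq (by linarith : (0:ℝ) ≤ C)]
      calc t m ≤ t n := ih
        _ = t n * 1 := by ring
        _ ≤ t n * (C * ((n:ℝ) + 1) ^ 2 / k) := by
            apply mul_le_mul_of_nonneg_left h1 (htpos n).le
        _ = t (n + 1) := (hstep n).symm
  -- split the sum
  rw [← Finset.sum_filter_add_sum_filter_not (Finset.Icc 1 N)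
      (fun m : ℕ => C * (m:ℝ) ^ 2 ≤ (k:ℝ))]
  have hsum1 : ∑ m ∈ (Finset.Icc 1 N).filter (fun m : ℕ => C * (m:ℝ) ^ 2 ≤ (k:ℝ)),
      t m ≤ (k:ℝ) := by
    have hcard : ((Finset.Icc 1 N).filter (fun m : ℕ => C * (m:ℝ) ^ 2 ≤ (k:ℝ))).card ≤ k := by
      have hsub : (Finset.Icc 1 N).filter (fun m : ℕ => C * (m:ℝ) ^ 2 ≤ (k:ℝ)) ⊆
          Finset.Icc 1 k := by
        intro m hm
        simp only [Finset.mem_filter, Finset.mem_Icc] at hm ⊢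
        obtain ⟨⟨h1m, _⟩, h2⟩ := hm
        refine ⟨h1m, ?_⟩
        have hm1 : (1:ℝ) ≤ (m:ℝ) := by exact_mod_cast h1m
        have : (m:ℝ) ≤ (k:ℝ) := by nlinarith
        exact_mod_cast this
      calc _ ≤ (Finset.Icc 1 k).card := Finset.card_le_card hsub
        _ = k := by simp
    calc ∑ m ∈ (Finset.Icc 1 N).filter (fun m : ℕ => C * (m:ℝ) ^ 2 ≤ (k:ℝ)), t m
        ≤ ((Finset.Icc 1 N).filter (fun m : ℕ => C * (m:ℝ) ^ 2 ≤ (k:ℝ))).card • (1:ℝ) := by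
          apply Finset.sum_le_card_nsmul
          intro m hm
          simp only [Finset.mem_filter] at hm
          exact lemA m hm.2
      _ ≤ (k:ℝ) := by
          rw [nsmul_eq_mul, mul_one]
          exact_mod_cast hcard
  have hsum2 : ∑ m ∈ (Finset.Icc 1 N).filter (fun m : ℕ => ¬ C * (m:ℝ) ^ 2 ≤ (k:ℝ)),
      t m ≤ (2:ℝ) ^ N * t N := by
    calc ∑ m ∈ (Finset.Icc 1 N).filter (fun m : ℕ => ¬ C * (m:ℝ) ^ 2 ≤ (k:ℝ)), t m
        ≤ ((Finset.Icc 1 N).filter (fun m : ℕ => ¬ C * (m:ℝ) ^ 2 ≤ (k:ℝ))).card • t N := by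
          apply Finset.sum_le_card_nsmul
          intro m hm
          simp only [Finset.mem_filter, Finset.mem_Icc, not_le] at hm
          exact lemB m N hm.1.2 hm.2.le
      _ ≤ (N : ℝ) * t N := by
          rw [nsmul_eq_mul]
          apply mul_le_mul_of_nonneg_right _ (htpos N).le
          have : ((Finset.Icc 1 N).filter (fun m : ℕ => ¬ C * (m:ℝ) ^ 2 ≤ (k:ℝ))).card ≤ N := by
            calc _ ≤ (Finset.Icc 1 N).card := Finset.card_le_card (Finset.filter_subset _ _)
              _ = N := by simp
          exact_mod_cast this
      _ ≤ (2:ℝ) ^ N * t N := by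
          apply mul_le_mul_of_nonneg_right _ (htpos N).le
          exact_mod_cast (Nat.lt_two_pow_self (n := N)).le
  have hexp : (2 * C) ^ N * (N.factorial : ℝ) ^ 2 / (k:ℝ) ^ N = 2 ^ N * t N := by
    simp only [ht, mul_pow]
    ring
  have htN : 0 ≤ t N := (htpos N).le
  calc _ ≤ (k:ℝ) + (2:ℝ) ^ N * t N := add_le_add hsum1 hsum2
    _ ≤ 2 * C * ((k : ℝ) + (2 * C) ^ N * (N.factorial : ℝ) ^ 2 / (k : ℝ) ^ N) := by
        rw [hexp]
        have h2N : (0:ℝ) ≤ (2:ℝ) ^ N * t N := by positivity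
        nlinarith [hk0.le]
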